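/- Let t > 0 and h > 0. For the symbol e^{2iλx + 8iλ³t}R(λ) with R analytic and bounded by 1 on ℂ⁺, the kernel H_{x,t}(s) = (1/2π) ∫_{Im λ = h} e^{2iλx + 8iλ³t + iλs} R(λ) dλ extends, for each fixed t > 0 and s ≥ 0, to an entire function of the complex variable x. -/

import Mathlib

open MeasureTheory Complex Filter Topology

noncomputable section

lemma gauss_int (b c : ℝ) (hc : 0 < c) :
    Integrable (fun σ : ℝ => Real.exp (b * |σ| - c * σ ^ 2)) := by
  have h1 : Integrable (fun σ : ℝ => Real.exp (b ^ 2 / (2 * c)) * Real.exp (-(c / 2) * σ ^ 2)) :=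
    (integrable_exp_neg_mul_sq (half_pos hc)).const_mul _
  refine h1.mono' ?_ ?_
  · exact (Real.continuous_exp.comp (by continuity)).aestronglyMeasurable
  · filter_upwards with σ
    rw [Real.norm_eq_abs, abs_of_pos (Real.exp_pos _), ← Real.exp_add, Real.exp_le_exp]
    have key : 2 * c * (b * |σ| - c * σ ^ 2) ≤ 2 * c * (b ^ 2 / (2 * c) + -(c / 2) * σ ^ 2) := by
      have h2 : 2 * c * (b ^ 2 / (2 * c)) = b ^ 2 := by field_simp
      have habs : |σ| ^ 2 = σ ^ 2 := _root_.sq_abs σ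
      have h3 : 2 * c * (b * |σ|) ≤ b ^ 2 + c ^ 2 * σ ^ 2 := by
        nlinarith [sq_nonneg (b - c * |σ|), sq_nonneg c, sq_nonneg (c * |σ|), sq_nonneg (c * σ)]
      nlinarith [h3]
    exact le_of_mul_le_mul_left key (by positivity)

/-- for `t > 0`, `h > 0`, `R` analytic and bounded by 1 on `ℂ⁺`, and `s ≥ 0`,
the kernel `H_{x,t}(s) = (1/2π)∫_{Im λ = h} e^{2iλx+8iλ³t+iλs} R(λ) dλ` extends to an
entire function of the complex variable `x` (given by the same contour-integral formula). -/
theorem hankel_kernel_entire_in_x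
    (t h : ℝ) (ht : 0 < t) (hh : 0 < h)
    (R : ℂ → ℂ)
    (hR : DifferentiableOn ℂ R {z : ℂ | 0 < z.im})
    (hRb : ∀ z : ℂ, 0 < z.im → ‖R z‖ ≤ 1)
    (s : ℝ) (hs : 0 ≤ s) :
    Differentiable ℂ (fun x : ℂ =>
      (2 * Real.pi : ℂ)⁻¹ * ∫ σ : ℝ,
        Complex.exp (2 * Complex.I * (σ + h * Complex.I) * x +
          8 * Complex.I * (σ + h * Complex.I) ^ 3 * t +
          Complex.I * (σ + h * Complex.I) * s) * R (σ + h * Complex.I)) := by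
  set lam : ℝ → ℂ := fun σ => (σ : ℂ) + h * I with hlam
  have hlam_im : ∀ σ : ℝ, (lam σ).im = h := by intro σ; simp [hlam]
  have hlam_mem : ∀ σ : ℝ, lam σ ∈ {z : ℂ | 0 < z.im} := by
    intro σ; simp [Set.mem_setOf_eq, hlam_im σ, hh]
  have hRcont : Continuous fun σ : ℝ => R (lam σ) :=
    hR.continuousOn.comp_continuous (by continuity) hlam_mem
  have hRle : ∀ σ : ℝ, ‖R (lam σ)‖ ≤ 1 := fun σ =>
    hRb _ (by simpa using hlam_mem σ)
  -- the exponent and its real part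
  set w : ℂ → ℝ → ℂ := fun x σ =>
    2 * I * lam σ * x + 8 * I * (lam σ) ^ 3 * t + I * lam σ * s with hw
  have hre : ∀ (x : ℂ) (σ : ℝ),
      (w x σ).re = -2 * (σ * x.im + h * x.re) - 24 * t * h * σ ^ 2 + 8 * t * h ^ 3 - h * s := by
    intro x σ
    simp [hw, hlam, Complex.add_re, Complex.mul_re, Complex.mul_im, pow_succ]
    ring
  have hlamc : Continuous lam := Complex.continuous_ofReal.add continuous_const
  have hwcont : ∀ x : ℂ, Continuous fun σ : ℝ => w x σ := fun x =>
    (((continuous_const.mul hlamc).mul continuous_const).add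
      ((continuous_const.mul (hlamc.pow 3)).mul continuous_const)).add
      ((continuous_const.mul hlamc).mul continuous_const)
  intro x₀
  set M : ℝ := ‖x₀‖ + 1 with hM
  set c : ℝ := 24 * t * h with hc
  have hcpos : 0 < c := by positivity
  set A : ℝ := 2 * h * M + 8 * t * h ^ 3 with hA
  set B : ℝ := 2 * M with hB
  -- pointwise bound on the exponential for x in the unit ball around x₀
  have hexp_bound : ∀ (x : ℂ), x ∈ Metric.ball x₀ 1 → ∀ σ : ℝ,
      Real.exp (w x σ).re ≤ Real.exp A * Real.exp (B * |σ| - c * σ ^ 2) := by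
    intro x hx σ
    rw [← Real.exp_add, Real.exp_le_exp, hre]
    have hxn : ‖x‖ ≤ M := by
      have := mem_ball_iff_norm.mp hx
      have := norm_sub_norm_le x x₀
      simp only [hM]; linarith
    have him : |x.im| ≤ M := le_trans (Complex.abs_im_le_norm x) hxn
    have hre' : |x.re| ≤ M := le_trans (Complex.abs_re_le_norm x) hxn
    have h1 : -(σ * x.im) ≤ |σ| * M := by
      calc -(σ * x.im) ≤ |σ * x.im| := neg_le_abs _
        _ = |σ| * |x.im| := abs_mul _ _
        _ ≤ |σ| * M := by
            exact mul_le_mul_of_nonneg_left him (abs_nonneg σ)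
    have h2 : -(h * x.re) ≤ h * M := by
      calc -(h * x.re) = h * (-x.re) := by ring
        _ ≤ h * |x.re| := by
            exact mul_le_mul_of_nonneg_left (neg_le_abs _) hh.le
        _ ≤ h * M := mul_le_mul_of_nonneg_left hre' hh.le
    have h3 : 0 ≤ h * s := mul_nonneg hh.le hs
    simp only [hA, hB, hc]
    nlinarith [h1, h2, h3]
  -- the functions F and F'
  set F : ℂ → ℝ → ℂ := fun x σ => Complex.exp (w x σ) * R (lam σ) with hF
  set F' : ℂ → ℝ → ℂ := fun x σ =>
    Complex.exp (w x σ) * (2 * I * lam σ) * R (lam σ) with hF'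
  have hFnorm : ∀ x σ, ‖F x σ‖ ≤ Real.exp (w x σ).re := by
    intro x σ
    rw [hF]
    simp only [norm_mul, Complex.norm_exp]
    calc Real.exp (w x σ).re * ‖R (lam σ)‖
        ≤ Real.exp (w x σ).re * 1 :=
          mul_le_mul_of_nonneg_left (hRle σ) (Real.exp_pos _).le
      _ = Real.exp (w x σ).re := mul_one _
  have hlam_abs : ∀ σ : ℝ, ‖lam σ‖ ≤ |σ| + h := by
    intro σ
    calc ‖lam σ‖ ≤ ‖(σ : ℂ)‖ + ‖(h : ℂ) * I‖ :=
          norm_add_le _ _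
      _ = |σ| + h := by simp [abs_of_pos hh]
  have hF'norm : ∀ x, x ∈ Metric.ball x₀ 1 → ∀ σ,
      ‖F' x σ‖ ≤ 2 * Real.exp h * Real.exp A * Real.exp ((B + 1) * |σ| - c * σ ^ 2) := by
    intro x hx σ
    rw [hF']
    simp only [norm_mul, Complex.norm_exp, map_mul]
    have hl : ‖lam σ‖ ≤ Real.exp h * Real.exp |σ| := by
      calc ‖lam σ‖ ≤ |σ| + h := hlam_abs σ
        _ ≤ Real.exp (|σ| + h) := by linarith [Real.add_one_le_exp (|σ| + h)]
        _ = Real.exp h * Real.exp |σ| := by rw [← Real.exp_add]; ring_nf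
    have e1 : Real.exp (w x σ).re ≤ Real.exp A * Real.exp (B * |σ| - c * σ ^ 2) :=
      hexp_bound x hx σ
    have h2abs : ‖(2 : ℂ)‖ = 2 := by
      simp
    have habsI : ‖I‖ = 1 := Complex.norm_I
    calc Real.exp (w x σ).re * (‖(2 : ℂ)‖ * ‖I‖ * ‖lam σ‖) *
          ‖R (lam σ)‖
        ≤ Real.exp (w x σ).re * (‖(2 : ℂ)‖ * ‖I‖ * ‖lam σ‖) * 1 := by
          apply mul_le_mul_of_nonneg_left (hRle σ); positivity
      _ = Real.exp (w x σ).re * (2 * ‖lam σ‖) := by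
          rw [h2abs, habsI]; ring
      _ ≤ (Real.exp A * Real.exp (B * |σ| - c * σ ^ 2)) * (2 * (Real.exp h * Real.exp |σ|)) := by
          apply mul_le_mul e1 (by linarith) (by positivity) (by positivity)
      _ = 2 * Real.exp h * Real.exp A * (Real.exp (B * |σ| - c * σ ^ 2) * Real.exp |σ|) := by
          ring
      _ = 2 * Real.exp h * Real.exp A * Real.exp ((B + 1) * |σ| - c * σ ^ 2) := by
          rw [← Real.exp_add]; congr 1; ring
  -- measurability
  have hFmeas : ∀ x : ℂ, AEStronglyMeasurable (F x) volume := by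
    intro x
    exact (((hwcont x).cexp).mul hRcont).aestronglyMeasurable
  have hF'meas : AEStronglyMeasurable (F' x₀) volume := by
    have : Continuous fun σ : ℝ => 2 * I * lam σ := continuous_const.mul hlamc
    exact ((((hwcont x₀).cexp).mul this).mul hRcont).aestronglyMeasurable
  -- integrability of F x₀
  have hFint : Integrable (F x₀) volume := by
    refine ((gauss_int B c hcpos).const_mul (Real.exp A)).mono' (hFmeas x₀) ?_
    filter_upwards with σ
    calc ‖F x₀ σ‖ ≤ Real.exp (w x₀ σ).re := hFnorm x₀ σ
      _ ≤ Real.exp A * Real.exp (B * |σ| - c * σ ^ 2) :=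
          hexp_bound x₀ (Metric.mem_ball_self one_pos) σ
  -- derivative
  have hderiv : ∀ (σ : ℝ) (x : ℂ), HasDerivAt (fun y => F y σ) (F' x σ) x := by
    intro σ x
    have d1 : HasDerivAt (fun y : ℂ => w y σ) (2 * I * lam σ) x := by
      have := ((hasDerivAt_id x).const_mul (2 * I * lam σ)).add_const
        (8 * I * (lam σ) ^ 3 * t)
      have := this.add_const (I * lam σ * s)
      simpa [hw, mul_comm] using this
    simpa [hF, hF', mul_comm, mul_assoc] using (d1.cexp).mul_const (R (lam σ))
  have key := hasDerivAt_integral_of_dominated_loc_of_deriv_le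
    (F := F) (F' := F') (x₀ := x₀)
    (bound := fun σ => 2 * Real.exp h * Real.exp A * Real.exp ((B + 1) * |σ| - c * σ ^ 2))
    (Metric.ball_mem_nhds x₀ one_pos)
    (Filter.Eventually.of_forall hFmeas) hFint hF'meas
    (Filter.Eventually.of_forall fun σ => fun x hx => hF'norm x hx σ)
    ((gauss_int (B + 1) c hcpos).const_mul _)
    (Filter.Eventually.of_forall fun σ => fun x _ => hderiv σ x)
  exact (key.2.differentiableAt).const_mul _
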